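/- (State error bound for pH-OpInf-DEIM.) Let T > 0. Let x: [0,T] → ℝⁿ be continuously differentiable, u: [0,T] → ℝᵐ continuous, and d: [0,T] → ℝⁿ continuous (the approximate time-derivative data D_t[x]). Let Φ ∈ ℝⁿˣʳ have orthonormal columns (ΦᵀΦ = I_r). Let the Hamiltonian be H(x) = (1/2)xᵀQx + cᵀh(x) with Q ∈ ℝⁿˣⁿ symmetric, c ∈ ℝᵈ, h: ℝⁿ → ℝᵈ continuously differentiable with Jacobian J_h(x) ∈ ℝᵈˣⁿ, so ∇H(x) = Qx + J_h(x)ᵀc, and assume ∇H: ℝⁿ → ℝⁿ and J_h: ℝⁿ → ℝᵈˣⁿ (with spectral norm) are Lipschitz continuous with constants C_Lip[∇H] and C_Lip[J_h]. Let Ψ ∈ ℝᵈˣᵐ⁰ have orthonormal columns, P ∈ ℝᵈˣᵐ⁰ have columns that are distinct standard basis vectors of ℝᵈ with PᵀΨ invertible, and ℙ := Ψ(PᵀΨ)⁻¹Pᵀ. Let D_r ∈ ℝʳˣʳ, B_r ∈ ℝʳˣᵐ, Q_r := ΦᵀQΦ, and let x_r: [0,T] → ℝʳ be continuously differentiable with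 ẋ_r(t) = D_r(Q_r x_r(t) + Φᵀ J_h(Φ x_r(t))ᵀ ℙᵀ c) + B_r u(t) and x_r(0) = Φᵀx(0). Define C₁ := μ(Φ D_r Φᵀ Q) + ‖D_rΦᵀ‖·C_Lip[J_h]·‖(PᵀΨ)⁻¹‖·‖c‖, C₂ := ‖D_rΦᵀ‖·C_Lip[∇H], C₃ := ‖D_r‖·‖c‖, α(T) := 4∫₀ᵀ e^{2C₁(T−τ)} dτ, and C(T) := max{1 + C₂²·T·α(T), C₃²·T·α(T), T·α(T)}. Then ∫₀ᵀ ‖x(t) − Φx_r(t)‖² dt ≤ C(T)·( ∫₀ᵀ ‖x(t) − ΦΦᵀx(t)‖² dt + ∫₀ᵀ ‖ẋ(t) − d(t)‖² dt + ∫₀ᵀ ‖Φᵀd(t) − D_rΦᵀ∇H(x(t)) − B_r u(t)‖² dt + ∫₀ᵀ ‖(I − ℙ)J_h(ΦΦᵀx(t))Φ‖² dt ). -/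

import Mathlib

open Matrix MeasureTheory RealInnerProductSpace

noncomputable section

/-- Euclidean space `ℝⁿ`. -/
abbrev Evec (n : ℕ) := EuclideanSpace ℝ (Fin n)

/-- Matrix-vector product on Euclidean spaces. -/
def mv {a b : ℕ} (M : Matrix (Fin a) (Fin b) ℝ) (v : Evec b) : Evec a := WithLp.toLp 2 (M.mulVec v)

/-- Spectral (operator) norm of a real matrix, viewed as a linear map between
Euclidean spaces. -/
def spec {a b : ℕ} (M : Matrix (Fin a) (Fin b) ℝ) : ℝ :=
  ‖LinearMap.toContinuousLinearMap (Matrix.toEuclideanLin M)‖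

/-- Logarithmic norm `μ(A) = sup_{v ≠ 0} ⟪v, A v⟫ / ⟪v, v⟫` of a real square matrix. -/
def logNorm {a : ℕ} (A : Matrix (Fin a) (Fin a) ℝ) : ℝ :=
  sSup {s : ℝ | ∃ v : Evec a, v ≠ 0 ∧ s = ⟪v, mv A v⟫ / ⟪v, v⟫}

open scoped Matrix.Norms.L2Operator

lemma spec_eq_norm {a b : ℕ} (M : Matrix (Fin a) (Fin b) ℝ) : spec M = ‖M‖ := rfl

lemma spec_nonneg {a b : ℕ} (M : Matrix (Fin a) (Fin b) ℝ) : 0 ≤ spec M := by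
  rw [spec_eq_norm]; exact norm_nonneg _

lemma norm_mv_le {a b : ℕ} (M : Matrix (Fin a) (Fin b) ℝ) (v : Evec b) :
    ‖mv M v‖ ≤ spec M * ‖v‖ := by
  rw [spec_eq_norm]; exact Matrix.l2_opNorm_mulVec M v

lemma spec_transpose {a b : ℕ} (M : Matrix (Fin a) (Fin b) ℝ) : spec Mᵀ = spec M := by
  rw [spec_eq_norm, spec_eq_norm, ← Matrix.l2_opNorm_conjTranspose M]
  congr 1

lemma spec_mul_le {a b c : ℕ} (M : Matrix (Fin a) (Fin b) ℝ) (N : Matrix (Fin b) (Fin c) ℝ) :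
    spec (M * N) ≤ spec M * spec N := by
  simp only [spec_eq_norm]; exact Matrix.l2_opNorm_mul M N

lemma mv_eq_lin {a b : ℕ} (M : Matrix (Fin a) (Fin b) ℝ) (v : Evec b) :
    mv M v = Matrix.toEuclideanLin M v := rfl

lemma mv_mv {a b c : ℕ} (M : Matrix (Fin a) (Fin b) ℝ) (N : Matrix (Fin b) (Fin c) ℝ)
    (v : Evec c) : mv M (mv N v) = mv (M * N) v := by
  simp [mv, Matrix.mulVec_mulVec]

lemma mv_add {a b : ℕ} (M : Matrix (Fin a) (Fin b) ℝ) (u v : Evec b) :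
    mv M (u + v) = mv M u + mv M v := by
  simp only [mv_eq_lin, map_add]

lemma mv_sub {a b : ℕ} (M : Matrix (Fin a) (Fin b) ℝ) (u v : Evec b) :
    mv M (u - v) = mv M u - mv M v := by
  simp only [mv_eq_lin, map_sub]

lemma mv_one {a : ℕ} (v : Evec a) : mv (1 : Matrix (Fin a) (Fin a) ℝ) v = v := by
  simp [mv]

lemma sub_mv {a b : ℕ} (M N : Matrix (Fin a) (Fin b) ℝ) (v : Evec b) :
    mv (M - N) v = mv M v - mv N v := by
  simp only [mv_eq_lin, map_sub, LinearMap.sub_apply]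

lemma inner_mv_left {a b : ℕ} (M : Matrix (Fin a) (Fin b) ℝ) (u : Evec b) (v : Evec a) :
    ⟪mv M u, v⟫ = ⟪u, mv Mᵀ v⟫ := by
  simp only [mv, PiLp.inner_apply, RCLike.inner_apply, conj_trivial]
  have h1 : ∑ i, v i * (M.mulVec u) i = v ⬝ᵥ (M.mulVec u) := rfl
  have h2 : ∑ i, (Mᵀ.mulVec v) i * u i = (Mᵀ.mulVec v) ⬝ᵥ u := rfl
  rw [h1, h2, Matrix.dotProduct_mulVec, Matrix.mulVec_transpose]

lemma inner_mv_mv {a b : ℕ} {M : Matrix (Fin a) (Fin b) ℝ} (hM : Mᵀ * M = 1)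
    (u v : Evec b) : ⟪mv M u, mv M v⟫ = ⟪u, v⟫ := by
  rw [inner_mv_left, mv_mv, hM, mv_one]

lemma norm_mv_eq {a b : ℕ} {M : Matrix (Fin a) (Fin b) ℝ} (hM : Mᵀ * M = 1)
    (u : Evec b) : ‖mv M u‖ = ‖u‖ := by
  have h := inner_mv_mv hM u u
  rw [real_inner_self_eq_norm_sq, real_inner_self_eq_norm_sq] at h
  nlinarith [norm_nonneg (mv M u), norm_nonneg u]

lemma spec_le_one {a b : ℕ} {M : Matrix (Fin a) (Fin b) ℝ} (hM : Mᵀ * M = 1) :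
    spec M ≤ 1 := by
  rw [spec_eq_norm]
  apply ContinuousLinearMap.opNorm_le_bound _ zero_le_one
  intro v
  have : ‖mv M v‖ = ‖v‖ := norm_mv_eq hM v
  rw [one_mul]
  exact le_of_eq this

lemma spec_transpose_le_one {a b : ℕ} {M : Matrix (Fin a) (Fin b) ℝ} (hM : Mᵀ * M = 1) :
    spec Mᵀ ≤ 1 := by rw [spec_transpose]; exact spec_le_one hM

lemma norm_mv_le_of_iso {a b : ℕ} {M : Matrix (Fin a) (Fin b) ℝ} (hM : Mᵀ * M = 1)
    (v : Evec a) : ‖mv Mᵀ v‖ ≤ ‖v‖ := by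
  calc ‖mv Mᵀ v‖ ≤ spec Mᵀ * ‖v‖ := norm_mv_le _ _
  _ ≤ 1 * ‖v‖ := by
      apply mul_le_mul_of_nonneg_right (spec_transpose_le_one hM) (norm_nonneg _)
  _ = ‖v‖ := one_mul _

lemma inner_mv_le_logNorm {a : ℕ} (A : Matrix (Fin a) (Fin a) ℝ) (v : Evec a) :
    ⟪v, mv A v⟫ ≤ logNorm A * ‖v‖ ^ 2 := by
  rcases eq_or_ne v 0 with rfl | hv
  · simp
  · have hvv : ⟪v, v⟫ = ‖v‖ ^ 2 := real_inner_self_eq_norm_sq v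
    have hvpos : (0 : ℝ) < ‖v‖ ^ 2 := by
      have := norm_pos_iff.mpr hv
      positivity
    have hmem : ⟪v, mv A v⟫ / ⟪v, v⟫ ∈
        {s : ℝ | ∃ w : Evec a, w ≠ 0 ∧ s = ⟪w, mv A w⟫ / ⟪w, w⟫} := ⟨v, hv, rfl⟩
    have hbdd : BddAbove {s : ℝ | ∃ w : Evec a, w ≠ 0 ∧ s = ⟪w, mv A w⟫ / ⟪w, w⟫} := by
      refine ⟨spec A, ?_⟩
      rintro s ⟨w, hw, rfl⟩
      have hww : ⟪w, w⟫ = ‖w‖ ^ 2 := real_inner_self_eq_norm_sq w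
      have hwpos : (0 : ℝ) < ‖w‖ ^ 2 := by
        have := norm_pos_iff.mpr hw
        positivity
      rw [hww, div_le_iff₀ hwpos]
      calc ⟪w, mv A w⟫ ≤ ‖w‖ * ‖mv A w‖ := real_inner_le_norm w _
        _ ≤ ‖w‖ * (spec A * ‖w‖) :=
            mul_le_mul_of_nonneg_left (norm_mv_le A w) (norm_nonneg w)
        _ = spec A * ‖w‖ ^ 2 := by ring
    have hle : ⟪v, mv A v⟫ / ⟪v, v⟫ ≤ logNorm A := le_csSup hbdd hmem
    rw [hvv] at hle
    calc ⟪v, mv A v⟫ = ⟪v, mv A v⟫ / ‖v‖ ^ 2 * ‖v‖ ^ 2 := by field_simp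
      _ ≤ logNorm A * ‖v‖ ^ 2 := mul_le_mul_of_nonneg_right hle (le_of_lt hvpos)

lemma spec_sub_spec_le {a b : ℕ} (M N : Matrix (Fin a) (Fin b) ℝ) :
    spec M - spec N ≤ spec (M - N) := by
  simp only [spec_eq_norm]
  exact norm_sub_norm_le M N

lemma integral_cauchy_schwarz {a b : ℝ} (hab : a ≤ b) {f g : ℝ → ℝ}
    (hf : ContinuousOn f (Set.Icc a b)) (hg : ContinuousOn g (Set.Icc a b)) :
    (∫ s in a..b, f s * g s) ^ 2 ≤
      (∫ s in a..b, f s ^ 2) * (∫ s in a..b, g s ^ 2) := by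
  have huIcc : Set.uIcc a b = Set.Icc a b := Set.uIcc_of_le hab
  have hif2 : IntervalIntegrable (fun s => f s ^ 2) volume a b :=
    (huIcc ▸ (hf.pow 2)).intervalIntegrable
  have hig2 : IntervalIntegrable (fun s => g s ^ 2) volume a b :=
    (huIcc ▸ (hg.pow 2)).intervalIntegrable
  have hifg : IntervalIntegrable (fun s => f s * g s) volume a b :=
    (huIcc ▸ (hf.mul hg)).intervalIntegrable
  set A := ∫ s in a..b, f s ^ 2 with hA
  set B := ∫ s in a..b, g s ^ 2 with hB
  set C := ∫ s in a..b, f s * g s with hC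
  have hAnn : 0 ≤ A := intervalIntegral.integral_nonneg hab (fun s _ => sq_nonneg _)
  have hBnn : 0 ≤ B := intervalIntegral.integral_nonneg hab (fun s _ => sq_nonneg _)
  have key : ∀ l : ℝ, 0 ≤ A - 2 * l * C + l ^ 2 * B := by
    intro l
    have h0 : 0 ≤ ∫ s in a..b, (f s - l * g s) ^ 2 :=
      intervalIntegral.integral_nonneg hab (fun s _ => sq_nonneg _)
    have hexp : (∫ s in a..b, (f s - l * g s) ^ 2)
        = A - 2 * l * C + l ^ 2 * B := by
      have : ∀ s, (f s - l * g s) ^ 2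
          = f s ^ 2 - (2 * l) * (f s * g s) + l ^ 2 * g s ^ 2 := by intro s; ring
      rw [intervalIntegral.integral_congr (fun s _ => this s)]
      rw [intervalIntegral.integral_add ((hif2.sub (hifg.const_mul _))) (hig2.const_mul _),
        intervalIntegral.integral_sub hif2 (hifg.const_mul _),
        intervalIntegral.integral_const_mul, intervalIntegral.integral_const_mul]
    linarith [hexp ▸ h0]
  rcases eq_or_lt_of_le hBnn with hB0 | hBpos
  · have hC0 : C = 0 := by
      by_contra hC0
      rcases lt_or_gt_of_ne hC0 with hneg | hpos
      · have hkey := key ((A + 1) / (2 * C))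
        rw [← hB0] at hkey
        have h2C : (2 * C : ℝ) ≠ 0 := by intro hcc; apply hC0; linarith
        have h2 : 2 * ((A + 1) / (2 * C)) * C = A + 1 := by
          field_simp
        rw [h2] at hkey
        simp only [mul_zero, add_zero] at hkey
        linarith
      · have hkey := key ((A + 1) / (2 * C))
        rw [← hB0] at hkey
        have h2C : (2 * C : ℝ) ≠ 0 := by intro hcc; apply hC0; linarith
        have h2 : 2 * ((A + 1) / (2 * C)) * C = A + 1 := by
          field_simp
        rw [h2] at hkey
        simp only [mul_zero, add_zero] at hkey
        linarith
    rw [hC0, ← hB0]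
    norm_num
  · have := key (C / B)
    have hBne : B ≠ 0 := ne_of_gt hBpos
    have : 0 ≤ A - C ^ 2 / B := by
      have hh : C / B * C = C ^ 2 / B := by field_simp
      have hh2 : (C / B) ^ 2 * B = C ^ 2 / B := by field_simp
      nlinarith [this]
    calc C ^ 2 = C ^ 2 / B * B := by field_simp
      _ ≤ A * B := mul_le_mul_of_nonneg_right (by linarith) hBnn

lemma gronwall_norm_le {k : ℕ} {T C₁ : ℝ} (hT : 0 ≤ T) {e e' : ℝ → Evec k} {g : ℝ → ℝ}
    (hde : ∀ t ∈ Set.Icc (0:ℝ) T, HasDerivAt e (e' t) t)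
    (he0 : e 0 = 0)
    (hg : Continuous g) (hgnn : ∀ t, 0 ≤ g t)
    (hineq : ∀ t ∈ Set.Icc (0:ℝ) T, ⟪e t, e' t⟫ ≤ C₁ * ‖e t‖ ^ 2 + g t * ‖e t‖) :
    ∀ t ∈ Set.Icc (0:ℝ) T,
      ‖e t‖ ≤ Real.exp (C₁ * t) * ∫ s in (0:ℝ)..t, Real.exp (-(C₁ * s)) * g s := by
  set G : ℝ → ℝ := fun t => ∫ s in (0:ℝ)..t, Real.exp (-(C₁ * s)) * g s with hGdef
  set b : ℝ → ℝ := fun t => Real.exp (C₁ * t) * G t with hbdef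
  have hgc : Continuous fun s => Real.exp (-(C₁ * s)) * g s := by
    exact (Real.continuous_exp.comp ((continuous_const.mul continuous_id).neg)).mul hg
  have hGd : ∀ t : ℝ, HasDerivAt G (Real.exp (-(C₁ * t)) * g t) t := fun t =>
    (hgc.integral_hasStrictDerivAt 0 t).hasDerivAt
  have hexpd : ∀ t : ℝ, HasDerivAt (fun s => Real.exp (C₁ * s)) (C₁ * Real.exp (C₁ * t)) t := by
    intro t
    have h1 : HasDerivAt (fun s : ℝ => C₁ * s) C₁ t := by
      simpa using (hasDerivAt_id t).const_mul C₁
    simpa [mul_comm] using h1.exp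
  have hbd : ∀ t : ℝ, HasDerivAt b (C₁ * b t + g t) t := by
    intro t
    have hd := (hexpd t).mul (hGd t)
    have hmul : Real.exp (C₁ * t) * Real.exp (-(C₁ * t)) = 1 := by
      rw [← Real.exp_add]; simp
    have heq : C₁ * Real.exp (C₁ * t) * G t
        + Real.exp (C₁ * t) * (Real.exp (-(C₁ * t)) * g t) = C₁ * b t + g t := by
      rw [hbdef]
      rw [show Real.exp (C₁ * t) * (Real.exp (-(C₁ * t)) * g t)
          = (Real.exp (C₁ * t) * Real.exp (-(C₁ * t))) * g t from by ring, hmul]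
      ring
    rw [← heq]
    exact hd
  have hGnn : ∀ t ∈ Set.Icc (0:ℝ) T, 0 ≤ G t := by
    intro t ht
    exact intervalIntegral.integral_nonneg ht.1
      (fun s _ => mul_nonneg (Real.exp_pos _).le (hgnn s))
  have hbnn : ∀ t ∈ Set.Icc (0:ℝ) T, 0 ≤ b t := fun t ht =>
    mul_nonneg (Real.exp_pos _).le (hGnn t ht)
  have hb0 : b 0 = 0 := by simp [hbdef, hGdef]
  set K₀ : ℝ := |C₁| + 1 with hK₀
  -- ε-perturbed comparison
  have hcomp : ∀ ε : ℝ, 0 < ε → ∀ t ∈ Set.Icc (0:ℝ) T,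
      ‖e t‖ ^ 2 ≤ (b t + ε * Real.exp (K₀ * t)) ^ 2 := by
    intro ε hε
    set B : ℝ → ℝ := fun t => (b t + ε * Real.exp (K₀ * t)) ^ 2 with hBdef
    set B' : ℝ → ℝ := fun t =>
      2 * (b t + ε * Real.exp (K₀ * t)) * (C₁ * b t + g t + ε * (K₀ * Real.exp (K₀ * t)))
      with hB'def
    have hEd : ∀ t : ℝ, HasDerivAt (fun s => Real.exp (K₀ * s)) (K₀ * Real.exp (K₀ * t)) t := by
      intro t
      have h1 : HasDerivAt (fun s : ℝ => K₀ * s) K₀ t := by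
        simpa using (hasDerivAt_id t).const_mul K₀
      simpa [mul_comm] using h1.exp
    have hBd : ∀ t : ℝ, HasDerivAt B (B' t) t := by
      intro t
      have hsum : HasDerivAt (fun s => b s + ε * Real.exp (K₀ * s))
          (C₁ * b t + g t + ε * (K₀ * Real.exp (K₀ * t))) t :=
        (hbd t).add ((hEd t).const_mul ε)
      have := hsum.fun_pow 2
      refine this.congr_deriv ?_
      rw [hB'def]
      ring
    have hy : ∀ t ∈ Set.Icc (0:ℝ) T,
        HasDerivAt (fun s => ‖e s‖ ^ 2) (2 * ⟪e t, e' t⟫) t := by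
      intro t ht
      have h1 : HasDerivAt (fun s => ⟪e s, e s⟫) (⟪e t, e' t⟫ + ⟪e' t, e t⟫) t :=
        HasDerivAt.inner ℝ (hde t ht) (hde t ht)
      have h2 : ∀ s : ℝ, ⟪e s, e s⟫ = ‖e s‖ ^ 2 := fun s => real_inner_self_eq_norm_sq (e s)
      have h3 : ⟪e t, e' t⟫ + ⟪e' t, e t⟫ = 2 * ⟪e t, e' t⟫ := by
        rw [real_inner_comm (e' t) (e t)]; ring
      rw [h3] at h1
      have h4 : (fun s => ‖e s‖ ^ 2) = fun s => ⟪e s, e s⟫ := by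
        funext s; rw [real_inner_self_eq_norm_sq]
      rw [h4]
      exact h1
    have key := image_le_of_deriv_right_lt_deriv_boundary
      (f := fun s => ‖e s‖ ^ 2) (f' := fun s => 2 * ⟪e s, e' s⟫) (a := 0) (b := T)
      (B := B) (B' := B')
      (fun t ht => ((hy t ht).continuousAt).continuousWithinAt)
      (fun t ht => (hy t (Set.mem_Icc_of_Ico ht)).hasDerivWithinAt)
      (by
        show ‖e 0‖ ^ 2 ≤ B 0
        rw [he0]
        simp only [norm_zero, hBdef]
        norm_num
        positivity)
      hBd
      (by
        intro t ht hcontact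
        have htIcc : t ∈ Set.Icc (0:ℝ) T := Set.mem_Icc_of_Ico ht
        have hbt : 0 ≤ b t := hbnn t htIcc
        have hX : (0:ℝ) < Real.exp (K₀ * t) := Real.exp_pos _
        have hE : (0:ℝ) < ε * Real.exp (K₀ * t) := mul_pos hε hX
        have hnorm : ‖e t‖ = b t + ε * Real.exp (K₀ * t) := by
          have h1 : ‖e t‖ ^ 2 = (b t + ε * Real.exp (K₀ * t)) ^ 2 := hcontact
          have h2 : (0:ℝ) ≤ ‖e t‖ := norm_nonneg _
          have h3 : (0:ℝ) ≤ b t + ε * Real.exp (K₀ * t) := by linarith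
          nlinarith [h1, h2, h3]
        have hin := hineq t htIcc
        have hKC : C₁ + 1 ≤ K₀ := by
          rw [hK₀]
          have := le_abs_self C₁
          linarith
        rw [hnorm] at hin
        have hgt : 0 ≤ g t := hgnn t
        show 2 * ⟪e t, e' t⟫ < B' t
        have hstep : B' t - 2 * (C₁ * (b t + ε * Real.exp (K₀ * t)) ^ 2
            + g t * (b t + ε * Real.exp (K₀ * t)))
            = 2 * (b t + ε * Real.exp (K₀ * t)) * (ε * Real.exp (K₀ * t)) * (K₀ - C₁) := by
          rw [hB'def]; ring
        have hpos : 0 < 2 * (b t + ε * Real.exp (K₀ * t)) * (ε * Real.exp (K₀ * t))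
            * (K₀ - C₁) := by
          have h1 : 0 < b t + ε * Real.exp (K₀ * t) := by linarith
          have h2 : (0:ℝ) < K₀ - C₁ := by linarith
          positivity
        linarith)
    exact fun t ht => key ht
  -- pass to the limit ε → 0⁺
  intro t ht
  have hlim : Filter.Tendsto (fun ε : ℝ => (b t + ε * Real.exp (K₀ * t)) ^ 2)
      (nhdsWithin 0 (Set.Ioi 0)) (nhds ((b t) ^ 2)) := by
    have hc : Continuous fun ε : ℝ => (b t + ε * Real.exp (K₀ * t)) ^ 2 :=
      (continuous_const.add (continuous_id.mul continuous_const)).pow 2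
    have := hc.tendsto 0
    simp only [zero_mul, add_zero] at this
    exact this.mono_left nhdsWithin_le_nhds
  have hev : ∀ᶠ ε in nhdsWithin (0:ℝ) (Set.Ioi 0),
      ‖e t‖ ^ 2 ≤ (b t + ε * Real.exp (K₀ * t)) ^ 2 := by
    filter_upwards [self_mem_nhdsWithin] with ε hε
    exact hcomp ε hε t ht
  have hsq : ‖e t‖ ^ 2 ≤ (b t) ^ 2 := ge_of_tendsto hlim hev
  have hbt : 0 ≤ b t := hbnn t ht
  show ‖e t‖ ≤ b t
  nlinarith [norm_nonneg (e t), hsq, hbt]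

lemma hasDerivAt_mv {a b : ℕ} (M : Matrix (Fin a) (Fin b) ℝ) {f : ℝ → Evec b} {f' : Evec b}
    {t : ℝ} (hf : HasDerivAt f f' t) : HasDerivAt (fun s => mv M (f s)) (mv M f') t := by
  have h := (LinearMap.toContinuousLinearMap
    (Matrix.toEuclideanLin M)).hasFDerivAt.comp_hasDerivAt t hf
  exact h

lemma continuous_mv {a b : ℕ} (M : Matrix (Fin a) (Fin b) ℝ) :
    Continuous (fun v : Evec b => mv M v) := by
  have h := (LinearMap.toContinuousLinearMap (Matrix.toEuclideanLin M)).continuous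
  simpa [mv_eq_lin] using h

set_option maxHeartbeats 4000000 in
/-- State error bound for the pH-OpInf-DEIM reduced-order
model: with Hamiltonian `H(x) = (1/2)xᵀQx + cᵀh(x)`, gradient
`∇H(x) = Qx + J_h(x)ᵀc`, DEIM projector `ℙ = Ψ(PᵀΨ)⁻¹Pᵀ` and ROM
`ẋ_r = D_r(Q_r x_r + Φᵀ J_h(Φ x_r)ᵀ ℙᵀ c) + B_r u`, `x_r(0) = Φᵀx(0)`,
the squared `L²` state error is bounded by `C(T)` times the sum of the
projection, data, optimization and hyper-reduction errors. -/
theorem state_error_bound_pH_OpInf_DEIM {n r d m m0 : ℕ}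
    (T : ℝ) (hT : 0 < T)
    (x x' : ℝ → Evec n)
    (hx : ∀ t ∈ Set.Icc (0 : ℝ) T, HasDerivAt x (x' t) t)
    (hx'c : ContinuousOn x' (Set.Icc (0 : ℝ) T))
    (u : ℝ → Evec m) (hu : ContinuousOn u (Set.Icc (0 : ℝ) T))
    (dfun : ℝ → Evec n) (hdfun : ContinuousOn dfun (Set.Icc (0 : ℝ) T))
    (Φ : Matrix (Fin n) (Fin r) ℝ) (hΦ : Φᵀ * Φ = 1)
    (Q : Matrix (Fin n) (Fin n) ℝ) (hQ : Qᵀ = Q) (c : Evec d)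
    (h : Evec n → Evec d) (Jh : Evec n → Matrix (Fin d) (Fin n) ℝ)
    (hJac : ∀ p, HasFDerivAt h
      (LinearMap.toContinuousLinearMap (Matrix.toEuclideanLin (Jh p))) p)
    (gH : Evec n → Evec n) (hgH : ∀ p, gH p = mv Q p + mv (Jh p)ᵀ c)
    (CLipH : ℝ) (hLipH : ∀ a b : Evec n, ‖gH a - gH b‖ ≤ CLipH * ‖a - b‖)
    (CLipJ : ℝ) (hLipJ : ∀ a b : Evec n, spec (Jh a - Jh b) ≤ CLipJ * ‖a - b‖)
    (Ψ P : Matrix (Fin d) (Fin m0) ℝ)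
    (hΨ : Ψᵀ * Ψ = 1)
    (hP : ∃ ℘ : Fin m0 → Fin d, Function.Injective ℘ ∧
      ∀ i j, P i j = if i = ℘ j then 1 else 0)
    (hPΨ : IsUnit (Pᵀ * Ψ))
    (Pbb : Matrix (Fin d) (Fin d) ℝ) (hPbb : Pbb = Ψ * (Pᵀ * Ψ)⁻¹ * Pᵀ)
    (Dr : Matrix (Fin r) (Fin r) ℝ) (Br : Matrix (Fin r) (Fin m) ℝ)
    (Qr : Matrix (Fin r) (Fin r) ℝ) (hQrdef : Qr = Φᵀ * Q * Φ)
    (xr : ℝ → Evec r)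
    (hxr : ∀ t ∈ Set.Icc (0 : ℝ) T, HasDerivAt xr
      (mv Dr (mv Qr (xr t) + mv Φᵀ (mv (Jh (mv Φ (xr t)))ᵀ (mv Pbbᵀ c))) + mv Br (u t)) t)
    (hxr0 : xr 0 = mv Φᵀ (x 0))
    (C₁ C₂ C₃ α CT : ℝ)
    (hC₁ : C₁ = logNorm (Φ * Dr * Φᵀ * Q)
      + spec (Dr * Φᵀ) * CLipJ * spec ((Pᵀ * Ψ)⁻¹) * ‖c‖)
    (hC₂ : C₂ = spec (Dr * Φᵀ) * CLipH)
    (hC₃ : C₃ = spec Dr * ‖c‖)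
    (hα : α = 4 * ∫ τ in (0 : ℝ)..T, Real.exp (2 * C₁ * (T - τ)))
    (hCT : CT = max (max (1 + C₂ ^ 2 * T * α) (C₃ ^ 2 * T * α)) (T * α)) :
    ∫ t in (0 : ℝ)..T, ‖x t - mv Φ (xr t)‖ ^ 2 ≤
      CT * ((∫ t in (0 : ℝ)..T, ‖x t - mv Φ (mv Φᵀ (x t))‖ ^ 2)
        + (∫ t in (0 : ℝ)..T, ‖x' t - dfun t‖ ^ 2)
        + (∫ t in (0 : ℝ)..T,
            ‖mv Φᵀ (dfun t) - mv Dr (mv Φᵀ (gH (x t))) - mv Br (u t)‖ ^ 2)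
        + (∫ t in (0 : ℝ)..T,
            (spec ((1 - Pbb) * Jh (mv Φ (mv Φᵀ (x t))) * Φ)) ^ 2)) := by
  classical
  have hT0 : (0:ℝ) ≤ T := hT.le
  obtain ⟨℘, h℘inj, hPdef⟩ := hP
  -- P has orthonormal columns
  have hPiso : Pᵀ * P = 1 := by
    ext i j
    simp only [Matrix.mul_apply, Matrix.transpose_apply, hPdef, Matrix.one_apply,
      mul_ite, ite_mul, one_mul, mul_one, mul_zero, zero_mul]
    rw [Finset.sum_ite_eq' Finset.univ (℘ j) (fun x => if x = ℘ i then (1:ℝ) else 0)]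
    simp [h℘inj.eq_iff, eq_comm]
  -- DEIM projector bound
  have hPbbBound : ∀ z : Evec d, ‖mv Pbbᵀ z‖ ≤ spec ((Pᵀ * Ψ)⁻¹) * ‖z‖ := by
    intro z
    have hPbbT : Pbbᵀ = P * ((Pᵀ * Ψ)⁻¹)ᵀ * Ψᵀ := by
      rw [hPbb, Matrix.transpose_mul, Matrix.transpose_mul, Matrix.transpose_transpose,
        ← Matrix.mul_assoc]
    calc ‖mv Pbbᵀ z‖ = ‖mv P (mv (((Pᵀ * Ψ)⁻¹)ᵀ * Ψᵀ) z)‖ := by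
          rw [mv_mv, hPbbT, Matrix.mul_assoc]
      _ = ‖mv (((Pᵀ * Ψ)⁻¹)ᵀ * Ψᵀ) z‖ := norm_mv_eq hPiso _
      _ = ‖mv ((Pᵀ * Ψ)⁻¹)ᵀ (mv Ψᵀ z)‖ := by rw [mv_mv]
      _ ≤ spec ((Pᵀ * Ψ)⁻¹)ᵀ * ‖mv Ψᵀ z‖ := norm_mv_le _ _
      _ ≤ spec ((Pᵀ * Ψ)⁻¹) * ‖z‖ := by
          rw [spec_transpose]
          exact mul_le_mul_of_nonneg_left (norm_mv_le_of_iso hΨ z) (spec_nonneg _)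
  -- abbreviations
  set p : ℝ → Evec n := fun t => mv Φ (mv Φᵀ (x t)) with hp
  set xrd : ℝ → Evec r := fun t =>
    mv Dr (mv Qr (xr t) + mv Φᵀ (mv (Jh (mv Φ (xr t)))ᵀ (mv Pbbᵀ c))) + mv Br (u t) with hxrd
  set e : ℝ → Evec r := fun t => mv Φᵀ (x t) - xr t with he
  set ed : ℝ → Evec r := fun t => mv Φᵀ (x' t) - xrd t with hed
  have hde : ∀ t ∈ Set.Icc (0:ℝ) T, HasDerivAt e (ed t) t := fun t ht =>
    (hasDerivAt_mv Φᵀ (hx t ht)).sub (hxr t ht)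
  have he0 : e 0 = 0 := by rw [he]; simp only; rw [hxr0, sub_self]
  -- continuity facts
  have hxc : ContinuousOn x (Set.Icc (0:ℝ) T) := fun t ht =>
    (hx t ht).continuousAt.continuousWithinAt
  have hxrc : ContinuousOn xr (Set.Icc (0:ℝ) T) := fun t ht =>
    (hxr t ht).continuousAt.continuousWithinAt
  have hec : ContinuousOn e (Set.Icc (0:ℝ) T) :=
    (((continuous_mv Φᵀ).comp_continuousOn hxc).sub hxrc)
  have hpc : ContinuousOn p (Set.Icc (0:ℝ) T) :=
    (continuous_mv Φ).comp_continuousOn ((continuous_mv Φᵀ).comp_continuousOn hxc)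
  have hgHc : Continuous gH := by
    refine (LipschitzWith.of_dist_le_mul (K := Real.toNNReal (max CLipH 0))
      (f := gH) ?_).continuous
    intro a b
    rw [dist_eq_norm, dist_eq_norm, Real.coe_toNNReal _ (le_max_right _ _)]
    calc ‖gH a - gH b‖ ≤ CLipH * ‖a - b‖ := hLipH a b
      _ ≤ max CLipH 0 * ‖a - b‖ :=
          mul_le_mul_of_nonneg_right (le_max_left _ _) (norm_nonneg _)
  set F : Evec n → ℝ := fun v => spec ((1 - Pbb) * Jh v * Φ) with hF
  have hFside : ∀ v w : Evec n, F v - F w ≤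
      spec (1 - Pbb) * spec Φ * max CLipJ 0 * ‖v - w‖ := by
    intro v w
    have h2 : (1 - Pbb) * Jh v * Φ - (1 - Pbb) * Jh w * Φ
        = (1 - Pbb) * (Jh v - Jh w) * Φ := by
      conv_rhs => rw [Matrix.mul_sub, Matrix.sub_mul]
    have h1 : F v - F w ≤ spec ((1 - Pbb) * (Jh v - Jh w) * Φ) := by
      rw [← h2]; exact spec_sub_spec_le _ _
    have h3 : spec ((1 - Pbb) * (Jh v - Jh w) * Φ)
        ≤ spec (1 - Pbb) * spec (Jh v - Jh w) * spec Φ := by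
      calc spec ((1 - Pbb) * (Jh v - Jh w) * Φ)
          ≤ spec ((1 - Pbb) * (Jh v - Jh w)) * spec Φ := spec_mul_le _ _
        _ ≤ spec (1 - Pbb) * spec (Jh v - Jh w) * spec Φ :=
            mul_le_mul_of_nonneg_right (spec_mul_le _ _) (spec_nonneg _)
    have h4 : spec (Jh v - Jh w) ≤ max CLipJ 0 * ‖v - w‖ := by
      calc spec (Jh v - Jh w) ≤ CLipJ * ‖v - w‖ := hLipJ v w
        _ ≤ max CLipJ 0 * ‖v - w‖ :=
            mul_le_mul_of_nonneg_right (le_max_left _ _) (norm_nonneg _)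
    calc F v - F w ≤ spec (1 - Pbb) * spec (Jh v - Jh w) * spec Φ := le_trans h1 h3
      _ ≤ spec (1 - Pbb) * (max CLipJ 0 * ‖v - w‖) * spec Φ := by
          apply mul_le_mul_of_nonneg_right _ (spec_nonneg _)
          exact mul_le_mul_of_nonneg_left h4 (spec_nonneg _)
      _ = spec (1 - Pbb) * spec Φ * max CLipJ 0 * ‖v - w‖ := by ring
  have hFc : Continuous F := by
    have hL : (0:ℝ) ≤ spec (1 - Pbb) * spec Φ * max CLipJ 0 :=
      mul_nonneg (mul_nonneg (spec_nonneg _) (spec_nonneg _)) (le_max_right _ _)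
    refine (LipschitzWith.of_dist_le_mul
      (K := Real.toNNReal (spec (1 - Pbb) * spec Φ * max CLipJ 0)) (f := F) ?_).continuous
    intro a b
    rw [Real.dist_eq, dist_eq_norm, Real.coe_toNNReal _ hL]
    rw [abs_sub_le_iff]
    constructor
    · exact hFside a b
    · calc F b - F a ≤ spec (1 - Pbb) * spec Φ * max CLipJ 0 * ‖b - a‖ := hFside b a
        _ = spec (1 - Pbb) * spec Φ * max CLipJ 0 * ‖a - b‖ := by rw [norm_sub_rev]
  -- the forcing function
  set a1 : ℝ → ℝ := fun t => ‖x' t - dfun t‖ with ha1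
  set a2 : ℝ → ℝ := fun t => ‖mv Φᵀ (dfun t) - mv Dr (mv Φᵀ (gH (x t))) - mv Br (u t)‖ with ha2
  set a3 : ℝ → ℝ := fun t => C₂ * ‖x t - p t‖ with ha3
  set a4 : ℝ → ℝ := fun t => C₃ * F (p t) with ha4
  set g0 : ℝ → ℝ := fun t => a1 t + a2 t + a3 t + a4 t with hg0
  have ha1c : ContinuousOn a1 (Set.Icc (0:ℝ) T) := (hx'c.sub hdfun).norm
  have ha2c : ContinuousOn a2 (Set.Icc (0:ℝ) T) := by
    apply ContinuousOn.norm
    exact (((continuous_mv Φᵀ).comp_continuousOn hdfun).sub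
      ((continuous_mv Dr).comp_continuousOn ((continuous_mv Φᵀ).comp_continuousOn
        (hgHc.comp_continuousOn hxc)))).sub ((continuous_mv Br).comp_continuousOn hu)
  have ha3c : ContinuousOn a3 (Set.Icc (0:ℝ) T) :=
    continuousOn_const.mul (hxc.sub hpc).norm
  have ha4c : ContinuousOn a4 (Set.Icc (0:ℝ) T) :=
    continuousOn_const.mul (hFc.comp_continuousOn hpc)
  have hg0c : ContinuousOn g0 (Set.Icc (0:ℝ) T) := ((ha1c.add ha2c).add ha3c).add ha4c
  set τ : ℝ → ℝ := fun s => max 0 (min s T) with hτ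
  have hτc : Continuous τ := continuous_const.max (continuous_id.min continuous_const)
  have hτmem : ∀ s, τ s ∈ Set.Icc (0:ℝ) T := fun s =>
    ⟨le_max_left _ _, max_le hT0 (min_le_right _ _)⟩
  have hτid : ∀ t ∈ Set.Icc (0:ℝ) T, τ t = t := fun t ht => by
    rw [hτ]; simp only; rw [min_eq_left ht.2, max_eq_right ht.1]
  set g : ℝ → ℝ := fun s => g0 (τ s) with hg
  have hgc : Continuous g := hg0c.comp_continuous hτc hτmem
  -- nonnegativity of components
  have ha3lb : ∀ t : ℝ, ‖mv (Dr * Φᵀ) (gH (x t) - gH (p t))‖ ≤ a3 t := by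
    intro t
    calc ‖mv (Dr * Φᵀ) (gH (x t) - gH (p t))‖
        ≤ spec (Dr * Φᵀ) * ‖gH (x t) - gH (p t)‖ := norm_mv_le _ _
      _ ≤ spec (Dr * Φᵀ) * (CLipH * ‖x t - p t‖) :=
          mul_le_mul_of_nonneg_left (hLipH _ _) (spec_nonneg _)
      _ = a3 t := by rw [ha3, hC₂]; ring
  have ha4nn : ∀ t : ℝ, 0 ≤ a4 t := fun t => by
    rw [ha4, hC₃]
    exact mul_nonneg (mul_nonneg (spec_nonneg _) (norm_nonneg _)) (spec_nonneg _)
  have hg0nn : ∀ t : ℝ, 0 ≤ g0 t := by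
    intro t
    have h1 : 0 ≤ a1 t := norm_nonneg _
    have h2 : 0 ≤ a2 t := norm_nonneg _
    have h3 : 0 ≤ a3 t := le_trans (norm_nonneg _) (ha3lb t)
    have h4 := ha4nn t
    rw [hg0]; dsimp only; linarith
  have hgnn : ∀ s, 0 ≤ g s := fun s => hg0nn (τ s)
  -- the key differential inequality
  have hkey : ∀ t ∈ Set.Icc (0:ℝ) T, ⟪e t, ed t⟫ ≤ C₁ * ‖e t‖ ^ 2 + g t * ‖e t‖ := by
    intro t ht
    have hEnn : (0:ℝ) ≤ ‖e t‖ := norm_nonneg _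
    have hgt : g t = g0 t := by rw [hg]; simp only; rw [hτid t ht]
    have hdecomp : ed t =
        mv Φᵀ (x' t - dfun t)
        + (mv Φᵀ (dfun t) - mv Dr (mv Φᵀ (gH (x t))) - mv Br (u t))
        + mv (Dr * Φᵀ) (gH (x t) - gH (p t))
        + mv (Dr * (Φᵀ * Q * Φ)) (e t)
        + mv (Dr * Φᵀ) (mv (Jh (p t) - Jh (mv Φ (xr t)))ᵀ (mv Pbbᵀ c))
        + mv Dr (mv ((1 - Pbb) * Jh (p t) * Φ)ᵀ c) := by
      simp only [hed, hxrd, he, hp]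
      rw [hgH (x t), hgH (mv Φ (mv Φᵀ (x t))), hQrdef]
      simp only [mv_add, mv_sub, sub_mv, mv_mv, Matrix.transpose_sub, Matrix.transpose_mul,
        Matrix.transpose_one, Matrix.transpose_transpose, Matrix.sub_mul, Matrix.mul_sub,
        Matrix.mul_one, Matrix.one_mul, Matrix.mul_assoc]
      abel
    have i1 : ⟪e t, mv Φᵀ (x' t - dfun t)⟫ ≤ a1 t * ‖e t‖ := by
      calc ⟪e t, mv Φᵀ (x' t - dfun t)⟫ ≤ ‖e t‖ * ‖mv Φᵀ (x' t - dfun t)‖ :=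
            real_inner_le_norm _ _
        _ ≤ ‖e t‖ * ‖x' t - dfun t‖ :=
            mul_le_mul_of_nonneg_left (norm_mv_le_of_iso hΦ _) hEnn
        _ = a1 t * ‖e t‖ := mul_comm _ _
    have i2 : ⟪e t, mv Φᵀ (dfun t) - mv Dr (mv Φᵀ (gH (x t))) - mv Br (u t)⟫
        ≤ a2 t * ‖e t‖ := by
      calc ⟪e t, mv Φᵀ (dfun t) - mv Dr (mv Φᵀ (gH (x t))) - mv Br (u t)⟫
          ≤ ‖e t‖ * ‖mv Φᵀ (dfun t) - mv Dr (mv Φᵀ (gH (x t))) - mv Br (u t)‖ :=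
            real_inner_le_norm _ _
        _ = a2 t * ‖e t‖ := mul_comm _ _
    have i3 : ⟪e t, mv (Dr * Φᵀ) (gH (x t) - gH (p t))⟫ ≤ a3 t * ‖e t‖ := by
      calc ⟪e t, mv (Dr * Φᵀ) (gH (x t) - gH (p t))⟫
          ≤ ‖e t‖ * ‖mv (Dr * Φᵀ) (gH (x t) - gH (p t))‖ := real_inner_le_norm _ _
        _ ≤ ‖e t‖ * a3 t := mul_le_mul_of_nonneg_left (ha3lb t) hEnn
        _ = a3 t * ‖e t‖ := mul_comm _ _
    have hmat : Φᵀ * (Φ * Dr * Φᵀ * Q * Φ) = Dr * (Φᵀ * Q * Φ) := by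
      simp only [← Matrix.mul_assoc]
      rw [hΦ, Matrix.one_mul]
    have i4 : ⟪e t, mv (Dr * (Φᵀ * Q * Φ)) (e t)⟫
        ≤ logNorm (Φ * Dr * Φᵀ * Q) * ‖e t‖ ^ 2 := by
      calc ⟪e t, mv (Dr * (Φᵀ * Q * Φ)) (e t)⟫
          = ⟪e t, mv Φᵀ (mv (Φ * Dr * Φᵀ * Q * Φ) (e t))⟫ := by rw [mv_mv, hmat]
        _ = ⟪mv Φ (e t), mv (Φ * Dr * Φᵀ * Q * Φ) (e t)⟫ := (inner_mv_left Φ (e t) _).symm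
        _ = ⟪mv Φ (e t), mv (Φ * Dr * Φᵀ * Q) (mv Φ (e t))⟫ := by
            rw [mv_mv, Matrix.mul_assoc]
        _ ≤ logNorm (Φ * Dr * Φᵀ * Q) * ‖mv Φ (e t)‖ ^ 2 := inner_mv_le_logNorm _ _
        _ = logNorm (Φ * Dr * Φᵀ * Q) * ‖e t‖ ^ 2 := by rw [norm_mv_eq hΦ]
    have hpw : p t - mv Φ (xr t) = mv Φ (e t) := by
      simp only [hp, he]
      rw [mv_sub]
    have h5a : ‖mv (Jh (p t) - Jh (mv Φ (xr t)))ᵀ (mv Pbbᵀ c)‖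
        ≤ CLipJ * ‖e t‖ * (spec ((Pᵀ * Ψ)⁻¹) * ‖c‖) := by
      calc ‖mv (Jh (p t) - Jh (mv Φ (xr t)))ᵀ (mv Pbbᵀ c)‖
          ≤ spec ((Jh (p t) - Jh (mv Φ (xr t)))ᵀ) * ‖mv Pbbᵀ c‖ := norm_mv_le _ _
        _ ≤ spec (Jh (p t) - Jh (mv Φ (xr t))) * (spec ((Pᵀ * Ψ)⁻¹) * ‖c‖) := by
            rw [spec_transpose]
            exact mul_le_mul_of_nonneg_left (hPbbBound c) (spec_nonneg _)
        _ ≤ CLipJ * ‖p t - mv Φ (xr t)‖ * (spec ((Pᵀ * Ψ)⁻¹) * ‖c‖) :=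
            mul_le_mul_of_nonneg_right (hLipJ _ _)
              (mul_nonneg (spec_nonneg _) (norm_nonneg _))
        _ = CLipJ * ‖e t‖ * (spec ((Pᵀ * Ψ)⁻¹) * ‖c‖) := by rw [hpw, norm_mv_eq hΦ]
    have i5 : ⟪e t, mv (Dr * Φᵀ) (mv (Jh (p t) - Jh (mv Φ (xr t)))ᵀ (mv Pbbᵀ c))⟫
        ≤ spec (Dr * Φᵀ) * CLipJ * spec ((Pᵀ * Ψ)⁻¹) * ‖c‖ * ‖e t‖ ^ 2 := by
      calc ⟪e t, mv (Dr * Φᵀ) (mv (Jh (p t) - Jh (mv Φ (xr t)))ᵀ (mv Pbbᵀ c))⟫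
          ≤ ‖e t‖ * ‖mv (Dr * Φᵀ) (mv (Jh (p t) - Jh (mv Φ (xr t)))ᵀ (mv Pbbᵀ c))‖ :=
            real_inner_le_norm _ _
        _ ≤ ‖e t‖ * (spec (Dr * Φᵀ)
              * (CLipJ * ‖e t‖ * (spec ((Pᵀ * Ψ)⁻¹) * ‖c‖))) := by
            apply mul_le_mul_of_nonneg_left _ hEnn
            calc ‖mv (Dr * Φᵀ) (mv (Jh (p t) - Jh (mv Φ (xr t)))ᵀ (mv Pbbᵀ c))‖
                ≤ spec (Dr * Φᵀ) * ‖mv (Jh (p t) - Jh (mv Φ (xr t)))ᵀ (mv Pbbᵀ c)‖ :=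
                  norm_mv_le _ _
              _ ≤ spec (Dr * Φᵀ) * (CLipJ * ‖e t‖ * (spec ((Pᵀ * Ψ)⁻¹) * ‖c‖)) :=
                  mul_le_mul_of_nonneg_left h5a (spec_nonneg _)
        _ = spec (Dr * Φᵀ) * CLipJ * spec ((Pᵀ * Ψ)⁻¹) * ‖c‖ * ‖e t‖ ^ 2 := by ring
    have i6 : ⟪e t, mv Dr (mv ((1 - Pbb) * Jh (p t) * Φ)ᵀ c)⟫ ≤ a4 t * ‖e t‖ := by
      have h6a : ‖mv Dr (mv ((1 - Pbb) * Jh (p t) * Φ)ᵀ c)‖ ≤ a4 t := by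
        calc ‖mv Dr (mv ((1 - Pbb) * Jh (p t) * Φ)ᵀ c)‖
            ≤ spec Dr * ‖mv ((1 - Pbb) * Jh (p t) * Φ)ᵀ c‖ := norm_mv_le _ _
          _ ≤ spec Dr * (spec (((1 - Pbb) * Jh (p t) * Φ)ᵀ) * ‖c‖) :=
              mul_le_mul_of_nonneg_left (norm_mv_le _ _) (spec_nonneg _)
          _ = spec Dr * (spec ((1 - Pbb) * Jh (p t) * Φ) * ‖c‖) := by rw [spec_transpose]
          _ = a4 t := by
              show _ = C₃ * F (p t)
              rw [hC₃, hF]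
              ring
      calc ⟪e t, mv Dr (mv ((1 - Pbb) * Jh (p t) * Φ)ᵀ c)⟫
          ≤ ‖e t‖ * ‖mv Dr (mv ((1 - Pbb) * Jh (p t) * Φ)ᵀ c)‖ := real_inner_le_norm _ _
        _ ≤ ‖e t‖ * a4 t := mul_le_mul_of_nonneg_left h6a hEnn
        _ = a4 t * ‖e t‖ := mul_comm _ _
    rw [hdecomp, hgt, inner_add_right, inner_add_right, inner_add_right, inner_add_right,
      inner_add_right, hC₁]
    have hgexp : g0 t = a1 t + a2 t + a3 t + a4 t := rfl
    rw [hgexp]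
    linarith [i1, i2, i3, i4, i5, i6]
  -- Gronwall
  have hbound := gronwall_norm_le hT0 hde he0 hgc hgnn hkey
  -- Pythagoras pointwise
  have hpyth : ∀ t : ℝ, ‖x t - mv Φ (xr t)‖ ^ 2 = ‖x t - p t‖ ^ 2 + ‖e t‖ ^ 2 := by
    intro t
    have hsplit : x t - mv Φ (xr t) = (x t - p t) + mv Φ (e t) := by
      simp only [hp, he]
      rw [mv_sub]
      abel
    have hzero : mv Φᵀ (x t - p t) = 0 := by
      simp only [hp]
      rw [mv_sub, mv_mv, hΦ, mv_one, sub_self]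
    have horth : ⟪x t - p t, mv Φ (e t)⟫ = 0 := by
      rw [real_inner_comm, inner_mv_left, hzero, inner_zero_right]
    rw [hsplit, @norm_add_sq_real, horth, norm_mv_eq hΦ]
    ring
  -- integrability helper
  have int_of : ∀ {f : ℝ → ℝ}, ContinuousOn f (Set.Icc (0:ℝ) T) →
      IntervalIntegrable f volume 0 T := fun {f} hf =>
    ((Set.uIcc_of_le hT0).symm ▸ hf).intervalIntegrable
  have hprojc : ContinuousOn (fun t => ‖x t - p t‖ ^ 2) (Set.Icc (0:ℝ) T) :=
    (hxc.sub hpc).norm.pow 2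
  have hesqc : ContinuousOn (fun t => ‖e t‖ ^ 2) (Set.Icc (0:ℝ) T) := hec.norm.pow 2
  have hLHSeq : (∫ t in (0:ℝ)..T, ‖x t - mv Φ (xr t)‖ ^ 2)
      = (∫ t in (0:ℝ)..T, ‖x t - p t‖ ^ 2) + ∫ t in (0:ℝ)..T, ‖e t‖ ^ 2 := by
    rw [← intervalIntegral.integral_add (int_of hprojc) (int_of hesqc)]
    exact intervalIntegral.integral_congr (fun t _ => hpyth t)
  -- the exponential integral
  set A4 : ℝ := ∫ s in (0:ℝ)..T, Real.exp (2 * C₁ * s) with hA4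
  have hA4nn : 0 ≤ A4 := intervalIntegral.integral_nonneg hT0 (fun s _ => (Real.exp_pos _).le)
  have hαA : α = 4 * A4 := by
    rw [hα, hA4]
    congr 1
    have hh := intervalIntegral.integral_comp_sub_left (a := 0) (b := T)
      (fun u => Real.exp (2 * C₁ * u)) T
    simpa using hh
  set J : ℝ := ∫ s in (0:ℝ)..T, g s ^ 2 with hJ
  have hJnn : 0 ≤ J := intervalIntegral.integral_nonneg hT0 (fun s _ => sq_nonneg _)
  -- pointwise squared bound on the reduced error
  have hesq : ∀ t ∈ Set.Icc (0:ℝ) T, ‖e t‖ ^ 2 ≤ A4 * J := by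
    intro t ht
    have hb := hbound t ht
    have h1 : Real.exp (C₁ * t) * ∫ s in (0:ℝ)..t, Real.exp (-(C₁ * s)) * g s
        = ∫ s in (0:ℝ)..t, Real.exp (C₁ * (t - s)) * g s := by
      rw [← intervalIntegral.integral_const_mul]
      apply intervalIntegral.integral_congr
      intro s _
      show Real.exp (C₁ * t) * (Real.exp (-(C₁ * s)) * g s) = Real.exp (C₁ * (t - s)) * g s
      rw [show C₁ * (t - s) = C₁ * t + -(C₁ * s) from by ring, Real.exp_add]
      ring
    rw [h1] at hb
    have h2 : ‖e t‖ ^ 2 ≤ (∫ s in (0:ℝ)..t, Real.exp (C₁ * (t - s)) * g s) ^ 2 := by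
      nlinarith [hb, norm_nonneg (e t)]
    have hfc : ContinuousOn (fun s => Real.exp (C₁ * (t - s))) (Set.Icc (0:ℝ) t) :=
      (Real.continuous_exp.comp
        (continuous_const.mul (continuous_const.sub continuous_id))).continuousOn
    have hCS : (∫ s in (0:ℝ)..t, Real.exp (C₁ * (t - s)) * g s) ^ 2
        ≤ (∫ s in (0:ℝ)..t, (Real.exp (C₁ * (t - s))) ^ 2) * ∫ s in (0:ℝ)..t, g s ^ 2 :=
      integral_cauchy_schwarz ht.1 hfc hgc.continuousOn
    have h3 : (∫ s in (0:ℝ)..t, (Real.exp (C₁ * (t - s))) ^ 2)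
        = ∫ s in (0:ℝ)..t, Real.exp (2 * C₁ * (t - s)) := by
      apply intervalIntegral.integral_congr
      intro s _
      show (Real.exp (C₁ * (t - s))) ^ 2 = Real.exp (2 * C₁ * (t - s))
      rw [sq, ← Real.exp_add]
      congr 1
      ring
    have h4 : (∫ s in (0:ℝ)..t, Real.exp (2 * C₁ * (t - s)))
        = ∫ u in (0:ℝ)..t, Real.exp (2 * C₁ * u) := by
      have hh := intervalIntegral.integral_comp_sub_left (a := 0) (b := t)
        (fun u => Real.exp (2 * C₁ * u)) t
      simpa using hh
    have h5 : (∫ u in (0:ℝ)..t, Real.exp (2 * C₁ * u)) ≤ A4 :=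
      intervalIntegral.integral_mono_interval le_rfl ht.1 ht.2
        (Filter.Eventually.of_forall fun s => (Real.exp_pos _).le)
        ((Real.continuous_exp.comp (continuous_const.mul continuous_id)).intervalIntegrable 0 T)
    have h6 : (∫ s in (0:ℝ)..t, g s ^ 2) ≤ J :=
      intervalIntegral.integral_mono_interval le_rfl ht.1 ht.2
        (Filter.Eventually.of_forall fun s => sq_nonneg _)
        ((hgc.pow 2).intervalIntegrable 0 T)
    have h7 : 0 ≤ ∫ s in (0:ℝ)..t, g s ^ 2 :=
      intervalIntegral.integral_nonneg ht.1 (fun s _ => sq_nonneg _)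
    calc ‖e t‖ ^ 2 ≤ (∫ s in (0:ℝ)..t, Real.exp (C₁ * (t - s)) * g s) ^ 2 := h2
      _ ≤ (∫ s in (0:ℝ)..t, (Real.exp (C₁ * (t - s))) ^ 2) * ∫ s in (0:ℝ)..t, g s ^ 2 := hCS
      _ = (∫ u in (0:ℝ)..t, Real.exp (2 * C₁ * u)) * ∫ s in (0:ℝ)..t, g s ^ 2 := by
          rw [h3, h4]
      _ ≤ A4 * J := mul_le_mul h5 h6 h7 hA4nn
  -- integrate the squared bound
  have hIe : (∫ t in (0:ℝ)..T, ‖e t‖ ^ 2) ≤ T * (A4 * J) := by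
    calc (∫ t in (0:ℝ)..T, ‖e t‖ ^ 2) ≤ ∫ _t in (0:ℝ)..T, A4 * J :=
        intervalIntegral.integral_mono_on hT0 (int_of hesqc) intervalIntegrable_const hesq
      _ = T * (A4 * J) := by
          rw [intervalIntegral.integral_const, smul_eq_mul, sub_zero]
  -- bound J by the four error integrals
  have hg0sq : ∀ t ∈ Set.Icc (0:ℝ) T,
      g t ^ 2 ≤ 4 * (a1 t ^ 2 + a2 t ^ 2 + a3 t ^ 2 + a4 t ^ 2) := by
    intro t ht
    have hgt : g t = a1 t + a2 t + a3 t + a4 t := by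
      rw [hg]; simp only; rw [hτid t ht]
    rw [hgt]
    nlinarith [sq_nonneg (a1 t - a2 t), sq_nonneg (a1 t - a3 t), sq_nonneg (a1 t - a4 t),
      sq_nonneg (a2 t - a3 t), sq_nonneg (a2 t - a4 t), sq_nonneg (a3 t - a4 t)]
  have hint1 : IntervalIntegrable (fun t => a1 t ^ 2) volume 0 T := int_of (ha1c.pow 2)
  have hint2 : IntervalIntegrable (fun t => a2 t ^ 2) volume 0 T := int_of (ha2c.pow 2)
  have hint3 : IntervalIntegrable (fun t => a3 t ^ 2) volume 0 T := int_of (ha3c.pow 2)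
  have hint4 : IntervalIntegrable (fun t => a4 t ^ 2) volume 0 T := int_of (ha4c.pow 2)
  have hJb : J ≤ 4 * ((∫ t in (0:ℝ)..T, a1 t ^ 2) + (∫ t in (0:ℝ)..T, a2 t ^ 2)
      + (∫ t in (0:ℝ)..T, a3 t ^ 2) + (∫ t in (0:ℝ)..T, a4 t ^ 2)) := by
    calc J ≤ ∫ t in (0:ℝ)..T, 4 * (a1 t ^ 2 + a2 t ^ 2 + a3 t ^ 2 + a4 t ^ 2) := by
          apply intervalIntegral.integral_mono_on hT0 (int_of (hgc.pow 2).continuousOn)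
          · exact (((hint1.add hint2).add hint3).add hint4).const_mul 4
          · exact hg0sq
      _ = 4 * ((∫ t in (0:ℝ)..T, a1 t ^ 2) + (∫ t in (0:ℝ)..T, a2 t ^ 2)
          + (∫ t in (0:ℝ)..T, a3 t ^ 2) + (∫ t in (0:ℝ)..T, a4 t ^ 2)) := by
          rw [intervalIntegral.integral_const_mul]
          congr 1
          rw [intervalIntegral.integral_add ((hint1.add hint2).add hint3) hint4,
            intervalIntegral.integral_add (hint1.add hint2) hint3,
            intervalIntegral.integral_add hint1 hint2]
  -- identify the component integrals
  have hEq1 : (∫ t in (0:ℝ)..T, a1 t ^ 2) = ∫ t in (0:ℝ)..T, ‖x' t - dfun t‖ ^ 2 :=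
    intervalIntegral.integral_congr (fun t _ => by rw [ha1])
  have hEq2 : (∫ t in (0:ℝ)..T, a2 t ^ 2)
      = ∫ t in (0:ℝ)..T, ‖mv Φᵀ (dfun t) - mv Dr (mv Φᵀ (gH (x t))) - mv Br (u t)‖ ^ 2 :=
    intervalIntegral.integral_congr (fun t _ => by rw [ha2])
  have hEq3 : (∫ t in (0:ℝ)..T, a3 t ^ 2)
      = C₂ ^ 2 * ∫ t in (0:ℝ)..T, ‖x t - p t‖ ^ 2 := by
    rw [← intervalIntegral.integral_const_mul]
    exact intervalIntegral.integral_congr (fun t _ => by rw [ha3]; ring)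
  have hEq4 : (∫ t in (0:ℝ)..T, a4 t ^ 2)
      = C₃ ^ 2 * ∫ t in (0:ℝ)..T, (spec ((1 - Pbb) * Jh (p t) * Φ)) ^ 2 := by
    rw [← intervalIntegral.integral_const_mul]
    exact intervalIntegral.integral_congr (fun t _ => by rw [ha4, hF]; ring)
  -- final assembly
  set Ip := ∫ t in (0:ℝ)..T, ‖x t - p t‖ ^ 2 with hIp
  set I2 := ∫ t in (0:ℝ)..T, ‖x' t - dfun t‖ ^ 2 with hI2
  set I3 := ∫ t in (0:ℝ)..T,
    ‖mv Φᵀ (dfun t) - mv Dr (mv Φᵀ (gH (x t))) - mv Br (u t)‖ ^ 2 with hI3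
  set I4 := ∫ t in (0:ℝ)..T, (spec ((1 - Pbb) * Jh (p t) * Φ)) ^ 2 with hI4
  have hIpnn : 0 ≤ Ip := intervalIntegral.integral_nonneg hT0 (fun t _ => sq_nonneg _)
  have hI2nn : 0 ≤ I2 := intervalIntegral.integral_nonneg hT0 (fun t _ => sq_nonneg _)
  have hI3nn : 0 ≤ I3 := intervalIntegral.integral_nonneg hT0 (fun t _ => sq_nonneg _)
  have hI4nn : 0 ≤ I4 := intervalIntegral.integral_nonneg hT0 (fun t _ => sq_nonneg _)
  have hJb2 : J ≤ 4 * (I2 + I3 + C₂ ^ 2 * Ip + C₃ ^ 2 * I4) := by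
    rw [hEq1, hEq2, hEq3, hEq4] at hJb
    linarith [hJb]
  have hIe2 : (∫ t in (0:ℝ)..T, ‖e t‖ ^ 2)
      ≤ T * α * I2 + T * α * I3 + C₂ ^ 2 * (T * α) * Ip + C₃ ^ 2 * (T * α) * I4 := by
    have hstep : T * (A4 * J) ≤ T * (A4 * (4 * (I2 + I3 + C₂ ^ 2 * Ip + C₃ ^ 2 * I4))) := by
      apply mul_le_mul_of_nonneg_left _ hT0
      exact mul_le_mul_of_nonneg_left hJb2 hA4nn
    have hring : T * (A4 * (4 * (I2 + I3 + C₂ ^ 2 * Ip + C₃ ^ 2 * I4)))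
        = T * α * I2 + T * α * I3 + C₂ ^ 2 * (T * α) * Ip + C₃ ^ 2 * (T * α) * I4 := by
      rw [hαA]; ring
    linarith [hIe, hstep, hring.le, hring.ge]
  have hαnn : 0 ≤ T * α := by
    rw [hαA]
    have : (0:ℝ) ≤ 4 * A4 := by linarith
    exact mul_nonneg hT0 this
  have hCT1 : 1 + C₂ ^ 2 * (T * α) ≤ CT := by
    rw [hCT]
    have h := le_max_left (max (1 + C₂ ^ 2 * T * α) (C₃ ^ 2 * T * α)) (T * α)
    have h2 := le_max_left (1 + C₂ ^ 2 * T * α) (C₃ ^ 2 * T * α)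
    nlinarith [h, h2]
  have hCT2 : C₃ ^ 2 * (T * α) ≤ CT := by
    rw [hCT]
    have h := le_max_left (max (1 + C₂ ^ 2 * T * α) (C₃ ^ 2 * T * α)) (T * α)
    have h2 := le_max_right (1 + C₂ ^ 2 * T * α) (C₃ ^ 2 * T * α)
    nlinarith [h, h2]
  have hCT3 : T * α ≤ CT := by
    rw [hCT]
    exact le_max_right _ _
  rw [hLHSeq]
  have t1 : (1 + C₂ ^ 2 * (T * α)) * Ip ≤ CT * Ip := mul_le_mul_of_nonneg_right hCT1 hIpnn
  have t2 : (T * α) * I2 ≤ CT * I2 := mul_le_mul_of_nonneg_right hCT3 hI2nn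
  have t3 : (T * α) * I3 ≤ CT * I3 := mul_le_mul_of_nonneg_right hCT3 hI3nn
  have t4 : (C₃ ^ 2 * (T * α)) * I4 ≤ CT * I4 := mul_le_mul_of_nonneg_right hCT2 hI4nn
  nlinarith [hIe2, t1, t2, t3, t4]
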